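/- Let n ≥ 2, let a₁, …, aₙ be pairwise distinct complex numbers, let I ⊆ ℂ[x₁, …, xₙ] be the ideal generated by ∑_{i=1}^{n} x_i² and all x_i x_j with i ≠ j, and let A = ℂ[x₁, …, xₙ]/I. Then: (1) there exists a unique ℂ-linear functional R : A → ℂ with R([1]) = 0, R([x_i]) = 0 for all i, and R([x_i²]) = 2/∏_{j≠i}(a_j − a_i) for all i = 1, …, n; (2) the symmetric bilinear form Q on A defined by Q(φ, ψ) = R(φ·ψ) has rank n + 2. -/

import Mathlib

open MvPolynomial

open Finset in
private lemma sum_inv_prod_sub {F : Type*} [Field F] {n : ℕ} (hn : 2 ≤ n)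
    (a : Fin n → F) (ha : Function.Injective a) :
    ∑ i : Fin n, (∏ j ∈ Finset.univ.erase i, (a i - a j))⁻¹ = 0 := by
  have hs : (Finset.univ : Finset (Fin n)).Nonempty := ⟨⟨0, by omega⟩, Finset.mem_univ _⟩
  have h1 := Lagrange.sum_basis ha.injOn hs
  have h2 := congrArg (fun p => Polynomial.coeff p (n - 1)) h1
  simp only [Polynomial.finset_sum_coeff, Polynomial.coeff_one] at h2
  have hne : ¬ (n - 1 = 0) := by omega
  rw [if_neg hne] at h2
  rw [← h2]
  refine Finset.sum_congr rfl fun i _ => ?_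
  have hdeg : (Lagrange.basis Finset.univ a i).natDegree = n - 1 := by
    rw [Lagrange.natDegree_basis ha.injOn (Finset.mem_univ i), Finset.card_univ, Fintype.card_fin]
  rw [← hdeg, Polynomial.coeff_natDegree]
  have hb : Lagrange.basis Finset.univ a i
      = ∏ j ∈ Finset.univ.erase i, Lagrange.basisDivisor (a i) (a j) := rfl
  rw [hb, Polynomial.leadingCoeff_prod
    (f := fun j => Lagrange.basisDivisor (a i) (a j)), ← Finset.prod_inv_distrib]
  refine Finset.prod_congr rfl fun j hj => ?_
  have hij : a i - a j ≠ 0 := sub_ne_zero_of_ne (fun h => (Finset.mem_erase.mp hj).1.symm (ha h))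
  rw [Lagrange.basisDivisor, Polynomial.leadingCoeff_mul, Polynomial.leadingCoeff_C,
    Polynomial.leadingCoeff_X_sub_C, mul_one]

private lemma sum_r_eq_zero {n : ℕ} (hn : 2 ≤ n) (a : Fin n → ℂ) (ha : Function.Injective a) :
    ∑ i : Fin n, 2 / ∏ j ∈ Finset.univ.erase i, (a j - a i) = 0 := by
  have h0 := sum_inv_prod_sub hn a ha
  have key : ∀ i : Fin n, (2 : ℂ) / ∏ j ∈ Finset.univ.erase i, (a j - a i)
      = 2 * (-1 : ℂ) ^ (n - 1) * (∏ j ∈ Finset.univ.erase i, (a i - a j))⁻¹ := by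
    intro i
    have hcard : (Finset.univ.erase i).card = n - 1 := by
      rw [Finset.card_erase_of_mem (Finset.mem_univ i), Finset.card_univ, Fintype.card_fin]
    have h1 : ∏ j ∈ Finset.univ.erase i, (a j - a i)
        = (-1 : ℂ) ^ (n - 1) * ∏ j ∈ Finset.univ.erase i, (a i - a j) := by
      calc ∏ j ∈ Finset.univ.erase i, (a j - a i)
          = ∏ j ∈ Finset.univ.erase i, (-1 : ℂ) * (a i - a j) :=
            Finset.prod_congr rfl fun j _ => by ring
        _ = (-1 : ℂ) ^ (n - 1) * ∏ j ∈ Finset.univ.erase i, (a i - a j) := by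
            rw [Finset.prod_mul_distrib, Finset.prod_const, hcard]
    rw [h1, div_eq_mul_inv, mul_inv,
      show ((-1 : ℂ) ^ (n - 1))⁻¹ = (-1 : ℂ) ^ (n - 1) by rw [← inv_pow]; norm_num]
    ring
  rw [Finset.sum_congr rfl fun i _ => key i, ← Finset.mul_sum, h0, mul_zero]

set_option maxHeartbeats 2000000 in
/-- Let `n ≥ 2`, let `a₁, …, aₙ` be pairwise distinct complex numbers, let
`I ⊆ ℂ[x₁, …, xₙ]` be the ideal generated by `∑ xᵢ²` and all `xᵢxⱼ` with `i ≠ j`, and let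
`A = ℂ[x₁, …, xₙ]/I`. Then: (1) there is a unique `ℂ`-linear functional `R : A → ℂ` with
`R[1] = 0`, `R[xᵢ] = 0` and `R[xᵢ²] = 2/∏_{j≠i}(aⱼ − aᵢ)`; (2) the symmetric bilinear form
`Q(φ,ψ) = R(φ·ψ)` on `A` has rank `n + 2`. -/
theorem stmt_2 (n : ℕ) (hn : 2 ≤ n) (a : Fin n → ℂ) (ha : Function.Injective a)
    (I : Ideal (MvPolynomial (Fin n) ℂ))
    (hI : I = Ideal.span (insert (∑ i : Fin n, X i ^ 2)
      {p : MvPolynomial (Fin n) ℂ | ∃ i j : Fin n, i ≠ j ∧ p = X i * X j})) :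
    (∃! R : (MvPolynomial (Fin n) ℂ ⧸ I) →ₗ[ℂ] ℂ,
      R 1 = 0 ∧
      (∀ i : Fin n, R (Ideal.Quotient.mk I (X i)) = 0) ∧
      (∀ i : Fin n, R (Ideal.Quotient.mk I (X i ^ 2)) =
        2 / ∏ j ∈ Finset.univ.erase i, (a j - a i))) ∧
    (∀ R : (MvPolynomial (Fin n) ℂ ⧸ I) →ₗ[ℂ] ℂ,
      (R 1 = 0 ∧
       (∀ i : Fin n, R (Ideal.Quotient.mk I (X i)) = 0) ∧
       (∀ i : Fin n, R (Ideal.Quotient.mk I (X i ^ 2)) =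
         2 / ∏ j ∈ Finset.univ.erase i, (a j - a i))) →
      Module.finrank ℂ
        (LinearMap.range ((LinearMap.mul ℂ (MvPolynomial (Fin n) ℂ ⧸ I)).compr₂ R)) = n + 2) := by
  classical
  set r : Fin n → ℂ := fun i => 2 / ∏ j ∈ Finset.univ.erase i, (a j - a i) with hr
  have hrne : ∀ i, r i ≠ 0 := by
    intro i
    have hprod : (∏ j ∈ Finset.univ.erase i, (a j - a i)) ≠ 0 := by
      rw [Finset.prod_ne_zero_iff]
      intro j hj
      exact sub_ne_zero_of_ne fun h => (Finset.mem_erase.mp hj).1 (ha h)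
    exact div_ne_zero two_ne_zero hprod
  have hrsum : ∑ i, r i = 0 := sum_r_eq_zero hn a ha
  have i₀ : Fin n := ⟨0, by omega⟩
  -- ideal membership lemmas
  have hg : (∑ i : Fin n, X i ^ 2 : MvPolynomial (Fin n) ℂ) ∈ I := by
    rw [hI]; exact Ideal.subset_span (Set.mem_insert _ _)
  have hpair : ∀ i j : Fin n, i ≠ j → (X i * X j : MvPolynomial (Fin n) ℂ) ∈ I := by
    intro i j hij
    rw [hI]; exact Ideal.subset_span (Set.mem_insert_iff.mpr (Or.inr ⟨i, j, hij, rfl⟩))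
  have hcube : ∀ i : Fin n, (X i : MvPolynomial (Fin n) ℂ) ^ 3 ∈ I := by
    intro i
    have heq : (X i : MvPolynomial (Fin n) ℂ) ^ 3
        = X i * (∑ k, X k ^ 2) - ∑ k ∈ Finset.univ.erase i, X k * (X i * X k) := by
      rw [Finset.mul_sum, ← Finset.add_sum_erase _ _ (Finset.mem_univ i),
        Finset.sum_congr rfl (fun k _ => show (X k : MvPolynomial (Fin n) ℂ) * (X i * X k)
          = X i * X k ^ 2 by ring)]
      ring
    rw [heq]
    exact sub_mem (Ideal.mul_mem_left _ _ hg)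
      (Ideal.sum_mem _ fun k hk =>
        Ideal.mul_mem_left _ _ (hpair i k (Finset.mem_erase.mp hk).1.symm))
  have hXsqX : ∀ i j : Fin n, (X i : MvPolynomial (Fin n) ℂ) ^ 2 * X j ∈ I := by
    intro i j
    rcases eq_or_ne i j with rfl | hij
    · rw [show (X i : MvPolynomial (Fin n) ℂ) ^ 2 * X i = X i ^ 3 by ring]; exact hcube i
    · rw [show (X i : MvPolynomial (Fin n) ℂ) ^ 2 * X j = X i * (X i * X j) by ring]
      exact Ideal.mul_mem_left _ _ (hpair i j hij)
  have hXXsq : ∀ i j : Fin n, (X i : MvPolynomial (Fin n) ℂ) * X j ^ 2 ∈ I := by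
    intro i j
    rw [show (X i : MvPolynomial (Fin n) ℂ) * X j ^ 2 = X j ^ 2 * X i by ring]
    exact hXsqX j i
  have hXsqXsq : ∀ i j : Fin n, (X i : MvPolynomial (Fin n) ℂ) ^ 2 * X j ^ 2 ∈ I := by
    intro i j
    rw [show (X i : MvPolynomial (Fin n) ℂ) ^ 2 * X j ^ 2 = (X i ^ 2 * X j) * X j by ring]
    exact Ideal.mul_mem_right _ _ (hXsqX i j)
  -- the linear functional on polynomials
  set F : MvPolynomial (Fin n) ℂ →ₗ[ℂ] ℂ :=
    ∑ i, r i • MvPolynomial.lcoeff ℂ (Finsupp.single i 2) with hF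
  have hFapp : ∀ p, F p = ∑ i, r i * coeff (Finsupp.single i 2) p := by
    intro p
    simp [hF, LinearMap.sum_apply, LinearMap.smul_apply, lcoeff_apply, smul_eq_mul]
  have hFsq : ∀ (q : MvPolynomial (Fin n) ℂ) (k : Fin n),
      F (q * X k ^ 2) = r k * coeff 0 q := by
    intro q k
    rw [hFapp, X_pow_eq_monomial]
    have hco : ∀ i : Fin n, coeff (Finsupp.single i 2) (q * monomial (Finsupp.single k 2) (1:ℂ))
        = if k = i then coeff 0 q else 0 := by
      intro i
      rw [coeff_mul_monomial']
      rcases eq_or_ne k i with rfl | h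
      · rw [if_pos le_rfl, if_pos rfl, tsub_self, mul_one]
      · rw [if_neg h, if_neg]
        intro hle
        have h2 := (Finsupp.le_iff _ _).mp hle k (by simp)
        simp [Finsupp.single_eq_of_ne h] at h2
    rw [Finset.sum_congr rfl fun i _ => by rw [hco i]]
    simp
  have hFpair : ∀ (q : MvPolynomial (Fin n) ℂ) (i j : Fin n), i ≠ j →
      F (q * (X i * X j)) = 0 := by
    intro q i j hij
    rw [hFapp]
    refine Finset.sum_eq_zero fun k _ => ?_
    have hxx : (X i : MvPolynomial (Fin n) ℂ) * X j
        = monomial (Finsupp.single i 1 + Finsupp.single j 1) 1 := by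
      rw [X, X, monomial_mul, mul_one]
    rw [hxx, coeff_mul_monomial', if_neg, mul_zero]
    intro hle
    rcases eq_or_ne k i with rfl | hki
    · have h2 := (Finsupp.le_iff _ _).mp hle j (by simp [hij.symm])
      simp [Finsupp.single_eq_of_ne hij, Finsupp.single_eq_of_ne hij.symm] at h2
    · have h2 := (Finsupp.le_iff _ _).mp hle i (by simp [hij])
      simp [Finsupp.single_eq_of_ne hij, Finsupp.single_eq_of_ne hki.symm] at h2
  have hF1 : F 1 = 0 := by
    rw [hFapp]
    refine Finset.sum_eq_zero fun k _ => ?_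
    rw [coeff_one, if_neg, mul_zero]
    exact fun h => two_ne_zero (Finsupp.single_eq_zero.mp h.symm)
  have hFX : ∀ i, F (X i) = 0 := by
    intro i
    rw [hFapp]
    refine Finset.sum_eq_zero fun k _ => ?_
    rw [coeff_X', if_neg, mul_zero]
    intro h
    rcases Finsupp.single_eq_single_iff _ _ _ _ |>.mp h with ⟨_, h12⟩ | ⟨h10, _⟩
    · exact (by norm_num : (1:ℕ) ≠ 2) h12
    · exact one_ne_zero h10
  have hFXsq : ∀ i, F (X i ^ 2) = r i := by
    intro i
    have := hFsq 1 i
    simpa using this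
  -- F vanishes on I
  have hFI : ∀ p ∈ I, F p = 0 := by
    intro p hp
    rw [hI] at hp
    have main : ∀ q, F (q * p) = 0 := by
      refine Submodule.span_induction ?_ ?_ ?_ ?_ hp
      · rintro x hx
        rcases Set.mem_insert_iff.mp hx with rfl | ⟨i, j, hij, rfl⟩
        · intro q
          rw [Finset.mul_sum, map_sum, Finset.sum_congr rfl fun k _ => hFsq q k,
            ← Finset.sum_mul, hrsum, zero_mul]
        · intro q; exact hFpair q i j hij
      · intro q; simp
      · intro x y _ _ hx hy q
        rw [mul_add, map_add, hx, hy, add_zero]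
      · intro c x _ hx q
        rw [smul_eq_mul, ← mul_assoc, hx]
    simpa using main 1
  -- construct R
  set R : (MvPolynomial (Fin n) ℂ ⧸ I) →ₗ[ℂ] ℂ :=
    (Submodule.liftQ (I.restrictScalars ℂ) F hFI).comp
      (Submodule.Quotient.restrictScalarsEquiv ℂ I).symm.toLinearMap with hRdef
  have hRmk : ∀ p, R (Ideal.Quotient.mk I p) = F p := fun p => rfl
  have hprop1 : R 1 = 0 := by
    rw [show (1 : MvPolynomial (Fin n) ℂ ⧸ I) = Ideal.Quotient.mk I 1 from (map_one _).symm,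
      hRmk, hF1]
  have hprop2 : ∀ i, R (Ideal.Quotient.mk I (X i)) = 0 := fun i => by rw [hRmk, hFX i]
  have hprop3 : ∀ i, R (Ideal.Quotient.mk I (X i ^ 2)) = r i := fun i => by rw [hRmk, hFXsq i]
  -- spanning family
  set u : Fin n ⊕ Fin n ⊕ Unit → MvPolynomial (Fin n) ℂ :=
    Sum.elim (fun i => X i) (Sum.elim (fun i => X i ^ 2) fun _ => 1) with hu
  set w : Fin n ⊕ Fin n ⊕ Unit → MvPolynomial (Fin n) ℂ ⧸ I :=
    fun c => Ideal.Quotient.mk I (u c) with hw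
  have hw_span : Submodule.span ℂ (Set.range w) = ⊤ := by
    rw [eq_top_iff]
    rintro φ -
    obtain ⟨p, rfl⟩ := Ideal.Quotient.mk_surjective φ
    have hmono : ∀ m : Fin n →₀ ℕ,
        Ideal.Quotient.mk I (monomial m 1) ∈ Submodule.span ℂ (Set.range w) := by
      intro m
      by_cases hA : ∃ i j : Fin n, i ≠ j ∧ m i ≠ 0 ∧ m j ≠ 0
      · obtain ⟨i, j, hij, hi, hj⟩ := hA
        have hle : Finsupp.single i 1 + Finsupp.single j 1 ≤ m := by
          rw [Finsupp.le_iff]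
          intro x hx
          rw [Finsupp.add_apply]
          rcases eq_or_ne x i with rfl | hxi
          · rw [Finsupp.single_eq_same, Finsupp.single_eq_of_ne hij]
            omega
          · rcases eq_or_ne x j with rfl | hxj
            · rw [Finsupp.single_eq_same, Finsupp.single_eq_of_ne hxi]
              omega
            · exfalso
              rw [Finsupp.mem_support_iff, Finsupp.add_apply,
                Finsupp.single_eq_of_ne hxi, Finsupp.single_eq_of_ne hxj]
                at hx
              exact hx rfl
        have hmem : (monomial m 1 : MvPolynomial (Fin n) ℂ) ∈ I := by
          have heq : (monomial m 1 : MvPolynomial (Fin n) ℂ)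
              = (X i * X j) * monomial (m - (Finsupp.single i 1 + Finsupp.single j 1)) 1 := by
            rw [X, X, monomial_mul, monomial_mul, mul_one, mul_one,
              add_tsub_cancel_of_le hle]
          rw [heq]
          exact Ideal.mul_mem_right _ _ (hpair i j hij)
        rw [Ideal.Quotient.eq_zero_iff_mem.mpr hmem]
        exact zero_mem _
      · by_cases hm : m = 0
        · subst hm
          rw [show (monomial 0 1 : MvPolynomial (Fin n) ℂ) = 1 by simp]
          exact Submodule.subset_span ⟨Sum.inr (Sum.inr ()), map_one _⟩
        · obtain ⟨i, hi⟩ : ∃ i, m i ≠ 0 := by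
            by_contra hc
            push_neg at hc
            exact hm (Finsupp.ext fun x => hc x)
          have hms : m = Finsupp.single i (m i) := by
            ext x
            rcases eq_or_ne x i with rfl | hx
            · rw [Finsupp.single_eq_same]
            · rw [Finsupp.single_eq_of_ne hx]
              by_contra hmx
              exact hA ⟨x, i, hx, hmx, hi⟩
          rcases Nat.lt_or_ge (m i) 3 with h3 | h3
          · interval_cases hk : (m i)
            · omega
            · rw [hms]
              exact Submodule.subset_span ⟨Sum.inl i, rfl⟩
            · rw [hms, ← X_pow_eq_monomial]
              exact Submodule.subset_span ⟨Sum.inr (Sum.inl i), rfl⟩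
          · have hmem : (monomial m 1 : MvPolynomial (Fin n) ℂ) ∈ I := by
              rw [hms, ← X_pow_eq_monomial,
                show m i = 3 + (m i - 3) by omega, pow_add]
              exact Ideal.mul_mem_right _ _ (hcube i)
            rw [Ideal.Quotient.eq_zero_iff_mem.mpr hmem]
            exact zero_mem _
    have hps : (Ideal.Quotient.mk I) p
        = ∑ m ∈ p.support, (Ideal.Quotient.mk I) (monomial m (coeff m p)) := by
      rw [← map_sum, support_sum_monomial_coeff]
    rw [hps]
    refine Submodule.sum_mem _ fun m _ => ?_
    have h1 : (monomial m (coeff m p) : MvPolynomial (Fin n) ℂ)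
        = coeff m p • monomial m 1 := by rw [smul_monomial, smul_eq_mul, mul_one]
    have h2 := map_smul (Ideal.Quotient.mkₐ ℂ I).toLinearMap (coeff m p) (monomial m 1)
    rw [AlgHom.toLinearMap_apply, AlgHom.toLinearMap_apply, Ideal.Quotient.mkₐ_eq_mk] at h2
    rw [h1, h2]
    exact Submodule.smul_mem _ _ (hmono m)
  have h1A : (1 : MvPolynomial (Fin n) ℂ ⧸ I) = Ideal.Quotient.mk I 1 := (map_one _).symm
  -- uniqueness of functionals with the prescribed values
  have hval : ∀ R' : (MvPolynomial (Fin n) ℂ ⧸ I) →ₗ[ℂ] ℂ,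
      R' 1 = 0 → (∀ i, R' (Ideal.Quotient.mk I (X i)) = 0) →
      (∀ i, R' (Ideal.Quotient.mk I (X i ^ 2)) = r i) → R' = R := by
    intro R' h1 h2 h3
    apply LinearMap.ext_on hw_span
    rintro x ⟨c, rfl⟩
    rcases c with i | c
    · simp only [hw, hu, Sum.elim_inl]
      rw [h2 i, hprop2 i]
    · rcases c with i | _
      · simp only [hw, hu, Sum.elim_inr, Sum.elim_inl]
        rw [h3 i, hprop3 i]
      · simp only [hw, hu, Sum.elim_inr, map_one]
        rw [h1, hprop1]
  refine ⟨⟨R, ⟨hprop1, hprop2, hprop3⟩, fun y hy => hval y hy.1 hy.2.1 hy.2.2⟩, ?_⟩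
  -- part 2 : the rank computation
  intro R' hR'
  obtain ⟨h1, h2, h3⟩ := hR'
  have h3' : ∀ i, R' (Ideal.Quotient.mk I (X i ^ 2)) = r i := h3
  set B := (LinearMap.mul ℂ (MvPolynomial (Fin n) ℂ ⧸ I)).compr₂ R' with hB
  have hBval : ∀ p q : MvPolynomial (Fin n) ℂ,
      B (Ideal.Quotient.mk I p) (Ideal.Quotient.mk I q) = R' (Ideal.Quotient.mk I (p * q)) := by
    intro p q
    simp [hB, LinearMap.compr₂_apply, LinearMap.mul_apply', map_mul]
  have hRI : ∀ p ∈ I, R' (Ideal.Quotient.mk I p) = 0 := fun p hp => by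
    rw [Ideal.Quotient.eq_zero_iff_mem.mpr hp, map_zero]
  set v' : Fin n ⊕ Fin 2 → ((MvPolynomial (Fin n) ℂ ⧸ I) →ₗ[ℂ] ℂ) :=
    Sum.elim (fun i => B (Ideal.Quotient.mk I (X i)))
      ![B 1, B (Ideal.Quotient.mk I (X i₀ ^ 2))] with hv'
  have hv0 : v' (Sum.inr 0) = B 1 := by simp [hv']
  have hv1 : v' (Sum.inr 1) = B (Ideal.Quotient.mk I (X i₀ ^ 2)) := by simp [hv']
  -- proportionality of the functionals attached to the squares
  have hpropB : ∀ i, B (Ideal.Quotient.mk I (X i ^ 2))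
      = (r i / r i₀) • B (Ideal.Quotient.mk I (X i₀ ^ 2)) := by
    intro i
    apply LinearMap.ext_on hw_span
    rintro x ⟨c, rfl⟩
    rcases c with j | c
    · simp only [hw, hu, Sum.elim_inl, LinearMap.smul_apply]
      rw [hBval, hBval, hRI _ (hXsqX i j), hRI _ (hXsqX i₀ j), smul_zero]
    · rcases c with j | _
      · simp only [hw, hu, Sum.elim_inr, Sum.elim_inl, LinearMap.smul_apply]
        rw [hBval, hBval, hRI _ (hXsqXsq i j), hRI _ (hXsqXsq i₀ j), smul_zero]
      · simp only [hw, hu, Sum.elim_inr, LinearMap.smul_apply]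
        rw [hBval, hBval, mul_one, mul_one, h3' i, h3' i₀, smul_eq_mul,
          div_mul_cancel₀ _ (hrne i₀)]
  -- the range of B is the span of v'
  have hrange : LinearMap.range B = Submodule.span ℂ (Set.range v') := by
    rw [LinearMap.range_eq_map, ← hw_span, Submodule.map_span]
    apply le_antisymm
    · rw [Submodule.span_le]
      rintro y ⟨x, ⟨c, rfl⟩, rfl⟩
      rcases c with j | c
      · exact Submodule.subset_span ⟨Sum.inl j, rfl⟩
      · rcases c with j | _
        · have hwc : B (w (Sum.inr (Sum.inl j)))
              = (r j / r i₀) • B (Ideal.Quotient.mk I (X i₀ ^ 2)) := by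
            simp only [hw, hu, Sum.elim_inr, Sum.elim_inl]
            exact hpropB j
          rw [hwc, ← hv1]
          exact Submodule.smul_mem _ _ (Submodule.subset_span ⟨Sum.inr 1, rfl⟩)
        · have hwc : B (w (Sum.inr (Sum.inr ()))) = B 1 := by
            simp only [hw, hu, Sum.elim_inr, map_one]
          rw [hwc, ← hv0]
          exact Submodule.subset_span ⟨Sum.inr 0, rfl⟩
    · rw [Submodule.span_le]
      rintro y ⟨c, rfl⟩
      rcases c with j | c
      · exact Submodule.subset_span ⟨w (Sum.inl j), ⟨Sum.inl j, rfl⟩, rfl⟩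
      · fin_cases c
        · refine Submodule.subset_span ⟨w (Sum.inr (Sum.inr ())), ⟨Sum.inr (Sum.inr ()), rfl⟩, ?_⟩
          simp only [hw, hu, hv', Sum.elim_inr, map_one]
          simp
        · refine Submodule.subset_span ⟨w (Sum.inr (Sum.inl i₀)), ⟨Sum.inr (Sum.inl i₀), rfl⟩, ?_⟩
          simp only [hw, hu, hv', Sum.elim_inr, Sum.elim_inl]
          simp
  -- linear independence of v'
  have hli : LinearIndependent ℂ v' := by
    rw [Fintype.linearIndependent_iff]
    intro g hg
    have happ : ∀ x, (∑ i : Fin n, g (Sum.inl i) • v' (Sum.inl i) x)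
        + (g (Sum.inr 0) • v' (Sum.inr 0) x + g (Sum.inr 1) • v' (Sum.inr 1) x) = 0 := by
      intro x
      have h0 := congrArg (fun f : (MvPolynomial (Fin n) ℂ ⧸ I) →ₗ[ℂ] ℂ => f x) hg
      simp only [LinearMap.sum_apply, LinearMap.smul_apply, LinearMap.zero_apply] at h0
      rw [Fintype.sum_sum_type, Fin.sum_univ_two] at h0
      simpa using h0
    have e1 : ∀ j, g (Sum.inl j) = 0 := by
      intro j
      have hx := happ (Ideal.Quotient.mk I (X j))
      have hterm : ∀ i, g (Sum.inl i) • v' (Sum.inl i) (Ideal.Quotient.mk I (X j))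
          = if i = j then g (Sum.inl j) * r j else 0 := by
        intro i
        rcases eq_or_ne i j with rfl | hij
        · rw [if_pos rfl]
          simp only [hv', Sum.elim_inl]
          rw [hBval, show (X i : MvPolynomial (Fin n) ℂ) * X i = X i ^ 2 from (sq _).symm,
            h3' i, smul_eq_mul]
        · simp only [if_neg hij, hv', Sum.elim_inl]
          rw [hBval, hRI _ (hpair i j hij), smul_zero]
      rw [Finset.sum_congr rfl (fun i _ => hterm i), Finset.sum_ite_eq' Finset.univ j,
        if_pos (Finset.mem_univ j)] at hx
      rw [hv0, hv1, h1A, hBval, hBval, one_mul] at hx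
      rw [h2 j, hRI _ (hXsqX i₀ j)] at hx
      have : g (Sum.inl j) * r j = 0 := by simpa using hx
      exact (mul_eq_zero.mp this).resolve_right (hrne j)
    have e2 : g (Sum.inr 1) = 0 := by
      have hx := happ 1
      rw [hv0, hv1, h1A, hBval, hBval, one_mul, mul_one] at hx
      have h1' : R' (Ideal.Quotient.mk I 1) = 0 := by rw [← h1A]; exact h1
      rw [h1', h3' i₀] at hx
      have hz : ∀ i : Fin n, g (Sum.inl i) • v' (Sum.inl i) (Ideal.Quotient.mk I 1) = 0 := by
        intro i
        simp only [hv', Sum.elim_inl]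
        rw [hBval, mul_one, h2 i, smul_zero]
      rw [Finset.sum_congr rfl (fun i _ => hz i), Finset.sum_const_zero] at hx
      have : g (Sum.inr 1) * r i₀ = 0 := by simpa using hx
      exact (mul_eq_zero.mp this).resolve_right (hrne i₀)
    have e3 : g (Sum.inr 0) = 0 := by
      have hx := happ (Ideal.Quotient.mk I (X i₀ ^ 2))
      rw [hv0, hv1, h1A, hBval, hBval, one_mul] at hx
      rw [h3' i₀, hRI _ (hXsqXsq i₀ i₀)] at hx
      have hz : ∀ i : Fin n, g (Sum.inl i) • v' (Sum.inl i) (Ideal.Quotient.mk I (X i₀ ^ 2)) = 0 := by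
        intro i
        simp only [hv', Sum.elim_inl]
        rw [hBval, hRI _ (hXXsq i i₀), smul_zero]
      rw [Finset.sum_congr rfl (fun i _ => hz i), Finset.sum_const_zero] at hx
      have : g (Sum.inr 0) * r i₀ = 0 := by simpa using hx
      exact (mul_eq_zero.mp this).resolve_right (hrne i₀)
    rintro (j | c)
    · exact e1 j
    · fin_cases c
      · exact e3
      · exact e2
  rw [hrange, finrank_span_eq_card hli, Fintype.card_sum, Fintype.card_fin, Fintype.card_fin]
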